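/- The image under the coordinatewise valuation of an open interval (a, b) in the positive Puiseux series K_{>0} is an interval in ℝ that is closed (i.e. of the form [val(a), val(b)], [val(a), +∞)∩ℝ or similar closed interval, or ℝ itself). -/

import Mathlib

noncomputable section
open scoped Classical

/-- The field of (formal generalized real) Puiseux series, realized as Hahn series
over `ℝ` with exponents in `ℝᵒᵈ`: the support of a series is well-ordered for the
*reversed* order of `ℝ`, so that each nonzero series has a term of greatest real
exponent (its leading term), the exponents being a strictly decreasing (finite or
unbounded) family of reals. -/
abbrev PS : Type := HahnSeries ℝᵒᵈ ℝ

namespace PS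

/-- The leading coefficient of a Puiseux series (`0` for the zero series). -/
def lc (x : PS) : ℝ := x.coeff x.order

/-- The valuation of a Puiseux series: its greatest exponent, with `val 0 = ⊥ = -∞`. -/
def val (x : PS) : WithBot ℝ :=
  if x = 0 then ⊥ else (OrderDual.ofDual x.order : ℝ)

/-- The real-valued valuation (greatest exponent), with junk value `0` at `0`. -/
def valR (x : PS) : ℝ := OrderDual.ofDual x.order

/-- A Puiseux series is nonnegative when its leading coefficient is nonnegative. -/
def Nonneg (x : PS) : Prop := 0 ≤ lc x

/-- A Puiseux series is positive when its leading coefficient is positive. -/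
def Pos (x : PS) : Prop := 0 < lc x

/-- The order of the field of Puiseux series: `x ≤ y` iff `y - x` is nonnegative. -/
def le (x y : PS) : Prop := Nonneg (y - x)

/-- The strict order of the field of Puiseux series. -/
def lt (x y : PS) : Prop := Pos (y - x)

/-- The positive monomial `t^r`. -/
def tpow (r : ℝ) : PS := HahnSeries.single (OrderDual.toDual r) 1

end PS

namespace PS

lemma lc_eq_leadingCoeff (x : PS) : lc x = x.leadingCoeff := by
  by_cases h : x = 0
  · simp [h, lc]
  · rw [lc, HahnSeries.leadingCoeff_eq]

lemma Pos.ne_zero {x : PS} (hx : Pos x) : x ≠ 0 := by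
  intro h
  rw [Pos, lc_eq_leadingCoeff, h, HahnSeries.leadingCoeff_zero] at hx
  exact lt_irrefl 0 hx

lemma orderTop_lt_of_valR_lt {x y : PS} (hx : x ≠ 0) (hy : y ≠ 0)
    (h : valR y < valR x) : x.orderTop < y.orderTop := by
  rw [← HahnSeries.order_eq_orderTop_of_ne_zero hx, ← HahnSeries.order_eq_orderTop_of_ne_zero hy,
    WithTop.coe_lt_coe]
  exact h

/-- Adding a series of strictly smaller valuation changes neither the valuation nor
the leading coefficient. -/
lemma add_of_valR_lt {x y : PS} (hx : x ≠ 0) (hy : y ≠ 0) (h : valR y < valR x) :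
    x + y ≠ 0 ∧ valR (x + y) = valR x ∧ lc (x + y) = lc x := by
  have hot : x.orderTop < y.orderTop := orderTop_lt_of_valR_lt hx hy h
  have h1 := HahnSeries.orderTop_add_eq_left hot
  have hne : x + y ≠ 0 := by
    rw [← HahnSeries.orderTop_ne_top, h1]
    rw [HahnSeries.orderTop_of_ne_zero hx]
    exact WithTop.coe_ne_top
  refine ⟨hne, ?_, ?_⟩
  · rw [← HahnSeries.order_eq_orderTop_of_ne_zero hne, ← HahnSeries.order_eq_orderTop_of_ne_zero hx,
      WithTop.coe_eq_coe] at h1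
    simp only [valR, h1]
  · rw [lc_eq_leadingCoeff, lc_eq_leadingCoeff]
    exact HahnSeries.leadingCoeff_add_eq_left hot

/-- The sum of two positive series is positive, of valuation the max of the two
valuations. -/
lemma pos_add {x y : PS} (hx : Pos x) (hy : Pos y) :
    Pos (x + y) ∧ valR x ≤ valR (x + y) := by
  rcases lt_trichotomy (valR x) (valR y) with h | h | h
  · obtain ⟨hne, hv, hl⟩ := add_of_valR_lt hy.ne_zero hx.ne_zero h
    rw [add_comm] at hne hv hl
    exact ⟨by rw [Pos, hl]; exact hy, by rw [hv]; exact le_of_lt h⟩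
  · -- equal valuations: coefficients add
    have horder : x.order = y.order := OrderDual.ofDual.injective h
    have hcoeff : (x + y).coeff x.order = lc x + lc y := by
      rw [HahnSeries.coeff_add]
      congr 1
      rw [lc, horder]
    have hcpos : (0 : ℝ) < (x + y).coeff x.order := by
      rw [hcoeff]; exact add_pos hx hy
    have hne : x + y ≠ 0 := by
      intro h0
      rw [h0, HahnSeries.coeff_zero] at hcpos
      exact lt_irrefl 0 hcpos
    have hle1 : (x + y).order ≤ x.order :=
      HahnSeries.order_le_of_coeff_ne_zero (ne_of_gt hcpos)
    have hle2 : x.order ≤ (x + y).order := by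
      have := HahnSeries.min_order_le_order_add (x := x) (y := y) hne
      rwa [horder, min_self, ← horder] at this
    have hoeq : (x + y).order = x.order := le_antisymm hle1 hle2
    constructor
    · rw [Pos, lc, hoeq, hcoeff]
      exact add_pos hx hy
    · simp only [valR, hoeq, le_refl]
  · obtain ⟨hne, hv, hl⟩ := add_of_valR_lt hx.ne_zero hy.ne_zero h
    exact ⟨by rw [Pos, hl]; exact hx, le_of_eq hv.symm⟩

lemma tpow_ne_zero (r : ℝ) : tpow r ≠ 0 := HahnSeries.single_ne_zero one_ne_zero

lemma valR_tpow (r : ℝ) : valR (tpow r) = r := by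
  simp only [valR, tpow, HahnSeries.order_single (one_ne_zero)]
  rfl

lemma lc_tpow (r : ℝ) : lc (tpow r) = 1 := by
  rw [lc_eq_leadingCoeff, tpow, HahnSeries.leadingCoeff_of_single]

lemma valR_neg (x : PS) : valR (-x) = valR x := by
  simp only [valR, HahnSeries.order_neg]

lemma lc_neg (x : PS) : lc (-x) = -lc x := by
  rw [lc, lc, HahnSeries.order_neg, HahnSeries.coeff_neg]

end PS

/-- The image under the valuation of an open interval `(a, b)` of
positive Puiseux series is an interval of `ℝ` (an order-connected set) that is
closed in `ℝ`. -/
theorem PS.val_image_Ioo (a b : PS) (ha : PS.lt 0 a) (hab : PS.lt a b) :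
    (PS.valR '' {x : PS | PS.lt a x ∧ PS.lt x b}).OrdConnected ∧
      IsClosed (PS.valR '' {x : PS | PS.lt a x ∧ PS.lt x b}) := by
  have ha' : PS.Pos a := by
    have : a - 0 = a := sub_zero a
    rw [PS.lt, this] at ha
    exact ha
  have hd : PS.Pos (b - a) := hab
  have hb' : PS.Pos b ∧ PS.valR a ≤ PS.valR b := by
    have := PS.pos_add ha' hd
    rwa [show a + (b - a) = b by abel] at this
  have himg : PS.valR '' {x : PS | PS.lt a x ∧ PS.lt x b}
      = Set.Icc (PS.valR a) (PS.valR b) := by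
    ext l
    constructor
    · rintro ⟨x, ⟨hax, hxb⟩, rfl⟩
      have hx' : PS.Pos x ∧ PS.valR a ≤ PS.valR x := by
        have := PS.pos_add ha' hax
        rwa [show a + (x - a) = x by abel] at this
      have hbx : PS.Pos b ∧ PS.valR x ≤ PS.valR b := by
        have := PS.pos_add hx'.1 hxb
        rwa [show x + (b - x) = b by abel] at this
      exact ⟨hx'.2, hbx.2⟩
    · rintro ⟨hal, hlb⟩
      rcases eq_or_lt_of_le hal with heq | hlt
      · -- l = valR a : take x = a + t^r with r very small
        set r : ℝ := min (PS.valR a) (PS.valR (b - a)) - 1 with hr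
        have hra : r < PS.valR a := by
          have : r ≤ PS.valR a - 1 := by
            rw [hr]; gcongr; exact min_le_left _ _
          linarith
        have hrd : r < PS.valR (b - a) := by
          have : r ≤ PS.valR (b - a) - 1 := by
            rw [hr]; gcongr; exact min_le_right _ _
          linarith
        refine ⟨a + PS.tpow r, ⟨?_, ?_⟩, ?_⟩
        · rw [PS.lt, show a + PS.tpow r - a = PS.tpow r by abel, PS.Pos, PS.lc_tpow]
          exact one_pos
        · rw [PS.lt, show b - (a + PS.tpow r) = (b - a) + -(PS.tpow r) by abel]
          have := PS.add_of_valR_lt hd.ne_zero (neg_ne_zero.mpr (PS.tpow_ne_zero r))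
            (by rw [PS.valR_neg, PS.valR_tpow]; exact hrd)
          rw [PS.Pos, this.2.2]
          exact hd
        · have := PS.add_of_valR_lt ha'.ne_zero (PS.tpow_ne_zero r)
            (by rw [PS.valR_tpow]; exact hra)
          rw [this.2.1, ← heq]
      · rcases eq_or_lt_of_le hlb with heq | hlt'
        · -- l = valR b : take x = b - t^r
          set r : ℝ := min (PS.valR b) (PS.valR (b - a)) - 1 with hr
          have hrb : r < PS.valR b := by
            have : r ≤ PS.valR b - 1 := by
              rw [hr]; gcongr; exact min_le_left _ _
            linarith
          have hrd : r < PS.valR (b - a) := by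
            have : r ≤ PS.valR (b - a) - 1 := by
              rw [hr]; gcongr; exact min_le_right _ _
            linarith
          refine ⟨b - PS.tpow r, ⟨?_, ?_⟩, ?_⟩
          · rw [PS.lt, show b - PS.tpow r - a = (b - a) + -(PS.tpow r) by abel]
            have := PS.add_of_valR_lt hd.ne_zero (neg_ne_zero.mpr (PS.tpow_ne_zero r))
              (by rw [PS.valR_neg, PS.valR_tpow]; exact hrd)
            rw [PS.Pos, this.2.2]
            exact hd
          · rw [PS.lt, show b - (b - PS.tpow r) = PS.tpow r by abel, PS.Pos, PS.lc_tpow]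
            exact one_pos
          · have := PS.add_of_valR_lt hb'.1.ne_zero (neg_ne_zero.mpr (PS.tpow_ne_zero r))
              (by rw [PS.valR_neg, PS.valR_tpow]; exact hrb)
            rw [show b - PS.tpow r = b + -(PS.tpow r) by abel, this.2.1, heq]
        · -- valR a < l < valR b : take x = t^l
          refine ⟨PS.tpow l, ⟨?_, ?_⟩, PS.valR_tpow l⟩
          · rw [PS.lt, show PS.tpow l - a = PS.tpow l + -a by abel]
            have := PS.add_of_valR_lt (PS.tpow_ne_zero l) (neg_ne_zero.mpr ha'.ne_zero)
              (by rw [PS.valR_neg, PS.valR_tpow]; exact hlt)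
            rw [PS.Pos, this.2.2, PS.lc_tpow]
            exact one_pos
          · rw [PS.lt, show b - PS.tpow l = b + -(PS.tpow l) by abel]
            have := PS.add_of_valR_lt hb'.1.ne_zero (neg_ne_zero.mpr (PS.tpow_ne_zero l))
              (by rw [PS.valR_neg, PS.valR_tpow]; exact hlt')
            rw [PS.Pos, this.2.2]
            exact hb'.1
  rw [himg]
  exact ⟨Set.ordConnected_Icc, isClosed_Icc⟩
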